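/- Suppose S < T and U < V are proper inclusions of finite groups, S is a maximal subgroup of T, and S is not a normal subgroup of T. Then S × U ≤ T × V admits no diagonal subgroups. -/

import Mathlib

/-- `G` is a *diagonal* subgroup for the pair `S × U ≤ T × V`:
it lies between `S × U` and `T × V = ⊤`, does not contain `T × U`
and is not contained in `S × V`. -/
def IsDiagonal {T V : Type*} [Group T] [Group V]
    (S : Subgroup T) (U : Subgroup V) (G : Subgroup (T × V)) : Prop :=
  S.prod U ≤ G ∧ ¬ ((⊤ : Subgroup T).prod U ≤ G) ∧ ¬ (G ≤ S.prod (⊤ : Subgroup V))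

theorem max_nonnormal_no_diagonal {T V : Type*} [Group T] [Group V] [Finite T] [Finite V]
    (S : Subgroup T) (U : Subgroup V) (hS : S < ⊤) (hU : U < ⊤)
    (hmax : IsCoatom S) (hnn : ¬ S.Normal) :
    ∀ G : Subgroup (T × V), ¬ IsDiagonal S U G := by
  rintro G ⟨hle, hTU, hSV⟩
  -- there is an element of G whose first coordinate is outside S
  obtain ⟨⟨t, v⟩, htv, ht⟩ : ∃ x ∈ G, x.1 ∉ S := by
    by_contra h
    push_neg at h
    exact hSV fun x hx => ⟨h x hx, trivial⟩
  -- the first projection of G is all of T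
  have hP : G.map (MonoidHom.fst T V) = ⊤ := by
    apply hmax.2
    refine lt_of_le_not_ge (fun s hs => ⟨(s, 1), hle ⟨hs, U.one_mem⟩, rfl⟩) fun h => ht (h ?_)
    exact ⟨(t, v), htv, rfl⟩
  -- the kernel of the second projection restricted to G
  set K := G.comap (MonoidHom.inl T V) with hK
  have hSK : S ≤ K := fun s hs => hle ⟨hs, U.one_mem⟩
  have hKnorm : K.Normal := by
    constructor
    intro k hk g
    have hg : g ∈ G.map (MonoidHom.fst T V) := hP ▸ Subgroup.mem_top g
    obtain ⟨⟨g', w⟩, hgw, rfl⟩ := hg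
    have : ((g', w) : T × V) * (k, 1) * ((g', w))⁻¹ ∈ G :=
      G.mul_mem (G.mul_mem hgw hk) (G.inv_mem hgw)
    simpa [hK, Subgroup.mem_comap, mul_assoc] using this
  have hSneK : S ≠ K := fun h => hnn (h ▸ hKnorm)
  have hKtop : K = ⊤ := hmax.2 K (lt_of_le_of_ne hSK hSneK)
  apply hTU
  rintro ⟨x, u⟩ ⟨-, hu⟩
  have h1 : ((x, 1) : T × V) ∈ G := by
    have : x ∈ K := hKtop ▸ Subgroup.mem_top x
    exact this
  have h2 : ((1, u) : T × V) ∈ G := hle ⟨S.one_mem, hu⟩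
  simpa using G.mul_mem h1 h2
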